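/- arXiv:1709.04079 — 2 statements merged into one kernel-verified Lean document; each statement's English description precedes it below -/
import Mathlib

section
/- Let G be a graph on n vertices containing at most 4n²/9 copies of the 4-cycle C₄, and let d_n, d_{n-1}, ..., d_1 be a min-degree sequence of G. Then d_i ≤ 2√n for every i ∈ [n]. -/
open SimpleGraph Finset

/-- Number of copies of `C₄` in `G`: the number of subgraphs isomorphic to the 4-cycle. -/
noncomputable def numC4 {V : Type} (G : SimpleGraph V) : ℕ :=
  Nat.card {H : G.Subgraph // Nonempty (H.coe ≃g SimpleGraph.cycleGraph 4)}

/-- The degree of `u` restricted to the vertex set `S`: the number of neighbors of `u`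
lying in `S` (which is the degree of `u` in the induced subgraph `G[S]` when `u ∈ S`). -/
noncomputable def degIn {V : Type} (G : SimpleGraph V) (S : Finset V) (u : V) : ℕ :=
  Nat.card {w : V // w ∈ S ∧ G.Adj u w}

instance subgraphFinite {V : Type} [Finite V] (G : SimpleGraph V) : Finite G.Subgraph := by
  have : Finite (Set V × (V → V → Prop)) := by infer_instance
  exact Finite.of_injective (fun H => (H.verts, H.Adj)) (by
    intro H1 H2 h
    ext1 <;> simp_all)

/-- The subgraph with vertices `{a,b,c,d}` and the edges of the 4-cycle `a-b-c-d-a`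
(intersected with `G`). -/
def C4sub {V : Type} (G : SimpleGraph V) (a b c d : V) : G.Subgraph where
  verts := {a, b, c, d}
  Adj x y := (s(x,y) = s(a,b) ∨ s(x,y) = s(c,b) ∨ s(x,y) = s(c,d) ∨ s(x,y) = s(a,d))
    ∧ G.Adj x y
  adj_sub h := h.2
  edge_vert := by
    rintro x y ⟨h|h|h|h, -⟩ <;> rw [Sym2.eq_iff] at h <;>
      rcases h with ⟨rfl,rfl⟩|⟨rfl,rfl⟩ <;> simp
  symm := by
    refine ⟨fun x y h => ?_⟩
    exact ⟨by rw [Sym2.eq_swap]; exact h.1, h.2.symm⟩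

lemma C4sub_adj {V : Type} (G : SimpleGraph V) (a b c d x y : V) :
    (C4sub G a b c d).Adj x y ↔
      (s(x,y) = s(a,b) ∨ s(x,y) = s(c,b) ∨ s(x,y) = s(c,d) ∨ s(x,y) = s(a,d))
        ∧ G.Adj x y := Iff.rfl

lemma C4sub_iso {V : Type} (G : SimpleGraph V) (a b c d : V)
    (hab : G.Adj a b) (hcb : G.Adj c b) (hcd : G.Adj c d) (had : G.Adj a d)
    (hac : a ≠ c) (hbd : b ≠ d) :
    Nonempty ((C4sub G a b c d).coe ≃g SimpleGraph.cycleGraph 4) := by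
  have hba : b ≠ a := hab.ne'
  have hbc : b ≠ c := hcb.ne'
  have hda : d ≠ a := had.ne'
  have hdc : d ≠ c := hcd.ne'
  have hab' : a ≠ b := hab.ne
  have hcb' : c ≠ b := hcb.ne
  have hcd' : c ≠ d := hcd.ne
  have had' : a ≠ d := had.ne
  have hca : c ≠ a := hac.symm
  have hdb : d ≠ b := hbd.symm
  have sba : G.Adj b a := hab.symm
  have sbc : G.Adj b c := hcb.symm
  have sda : G.Adj d a := had.symm
  have sdc : G.Adj d c := hcd.symm
  set H := C4sub G a b c d with hH
  let f : Fin 4 → H.verts := ![⟨a, by simp [hH, C4sub]⟩, ⟨b, by simp [hH, C4sub]⟩,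
    ⟨c, by simp [hH, C4sub]⟩, ⟨d, by simp [hH, C4sub]⟩]
  have hbij : Function.Bijective f := by
    constructor
    · intro i j hij
      fin_cases i <;> fin_cases j <;> simp_all [f, Subtype.ext_iff] <;>
        simp_all [eq_comm]
    · rintro ⟨x, hx⟩
      have : x = a ∨ x = b ∨ x = c ∨ x = d := by simpa [hH, C4sub] using hx
      rcases this with rfl|rfl|rfl|rfl
      · exact ⟨0, rfl⟩
      · exact ⟨1, rfl⟩
      · exact ⟨2, rfl⟩
      · exact ⟨3, rfl⟩
  refine ⟨(RelIso.symm ⟨Equiv.ofBijective f hbij, @fun i j => ?_⟩)⟩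
  simp only [Equiv.ofBijective_apply]
  rw [SimpleGraph.Subgraph.coe_adj]
  fin_cases i <;> fin_cases j <;>
    simp_all (config := { decide := true }) [f, hH, C4sub, Sym2.eq_iff,
      SimpleGraph.cycleGraph_adj]

set_option maxHeartbeats 800000 in
lemma arith_contra (rs D M Pr Rr T2 qc c4 : ℝ)
    (hrs1 : 1 ≤ rs) (hDrs : 2*rs < D) (hDM : D + 1 ≤ M) (hM1 : 1 ≤ M) (hMN : M ≤ rs^2)
    (hPr : Pr = M*M - M) (hCS : Rr^2 ≤ Pr * T2) (hRlow : M*(D*(D-1)) ≤ Rr)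
    (hQr : qc = T2 - Rr) (hqc0 : 0 ≤ qc) (h8 : qc ≤ 8*c4) (hG : c4 ≤ 4*(rs^2)^2/9) :
    False := by
  have hrs0 : (0:ℝ) < rs := by linarith
  have hMpos : (0:ℝ) < M := by linarith
  have hD2 : (2:ℝ) < D := by linarith
  have hX : 4*rs^2 - 2*rs < D*(D-1) := by
    nlinarith [mul_pos (show (0:ℝ) < D - 2*rs by linarith)
      (show (0:ℝ) < D + 2*rs - 1 by nlinarith)]
  have hXM : M - 1 < D*(D-1) := by nlinarith [sq_nonneg (rs - 1)]
  have hR0P : Pr < M * (D*(D-1)) := by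
    rw [hPr]
    nlinarith [mul_pos hMpos (show (0:ℝ) < D*(D-1) - (M-1) by linarith)]
  have hR0nn : (0:ℝ) ≤ M * (D*(D-1)) := by nlinarith
  have hmono : (M*(D*(D-1)))^2 - Pr * (M*(D*(D-1))) ≤ Rr^2 - Pr * Rr := by
    nlinarith [mul_nonneg (sub_nonneg.mpr hRlow)
      (show (0:ℝ) ≤ Rr + M*(D*(D-1)) - Pr by linarith)]
  have hQP : Rr^2 - Pr * Rr ≤ Pr * qc := by rw [hQr]; nlinarith
  have hPrM2 : Pr ≤ M*M := by rw [hPr]; nlinarith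
  have hfinal : D*(D-1) * (D*(D-1) - M + 1) ≤ qc := by
    have h1 : M*M*((D*(D-1)) * (D*(D-1) - M + 1)) ≤ qc * (M*M) := by
      calc M*M*((D*(D-1)) * (D*(D-1) - M + 1))
          = (M*(D*(D-1)))^2 - (M*M-M) * (M*(D*(D-1))) := by ring
        _ = (M*(D*(D-1)))^2 - Pr * (M*(D*(D-1))) := by rw [hPr]
        _ ≤ Rr^2 - Pr*Rr := hmono
        _ ≤ Pr * qc := hQP
        _ ≤ qc * (M*M) := by nlinarith [mul_le_mul_of_nonneg_right hPrM2 hqc0]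
    exact le_of_mul_le_mul_left
      (show (M*M) * (D*(D-1) * (D*(D-1)-M+1)) ≤ (M*M) * qc by linarith [h1])
      (mul_pos hMpos hMpos)
  have hY : 3*rs^2 - 2*rs + 1 < D*(D-1) - M + 1 := by linarith
  have hpos1 : (0:ℝ) < 4*rs^2 - 2*rs := by nlinarith
  have hpos2 : (0:ℝ) < 3*rs^2 - 2*rs + 1 := by nlinarith [sq_nonneg (rs-1)]
  have hfin2 : (4*rs^2 - 2*rs) * (3*rs^2 - 2*rs + 1) < qc :=
    lt_of_lt_of_le (mul_lt_mul'' hX hY (le_of_lt hpos1) (le_of_lt hpos2)) hfinal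
  have he : (0:ℝ) ≤ rs - 1 := by linarith
  have hpoly : 32/9 * rs^4 ≤ (4*rs^2 - 2*rs) * (3*rs^2 - 2*rs + 1) := by
    nlinarith [mul_nonneg hrs0.le (mul_nonneg (mul_nonneg he he) he),
      mul_nonneg hrs0.le (sq_nonneg (rs-1)), mul_nonneg hrs0.le he, hrs0]
  nlinarith [hfin2, hpoly, h8, hG]

set_option maxHeartbeats 1000000 in
/-- Let `G` be a graph on `n` vertices containing at most `4n²/9` copies of `C₄`, and let
`v` be a min-degree ordering of `G` (indexed so that `v i` is a vertex of minimum degree in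
the induced subgraph `G_i = G[{v j : j ≤ i}]`).  Then every term `d_i` of the min-degree
sequence satisfies `d_i ≤ 2√n`. -/
theorem statement_5 (n : ℕ) (G : SimpleGraph (Fin n))
    (hG : (numC4 G : ℝ) ≤ 4 * (n : ℝ) ^ 2 / 9)
    (v : Fin n ≃ Fin n)
    (hmin : ∀ i : Fin n, ∀ u ∈ (Finset.Iic i).image ⇑v,
      degIn G ((Finset.Iic i).image ⇑v) (v i) ≤ degIn G ((Finset.Iic i).image ⇑v) u) :
    ∀ i : Fin n, (degIn G ((Finset.Iic i).image ⇑v) (v i) : ℝ) ≤ 2 * Real.sqrt n := by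
  classical
  intro i
  by_contra hlt
  push_neg at hlt
  set S : Finset (Fin n) := (Finset.Iic i).image ⇑v with hS
  have hdegIn : ∀ u, degIn G S u = (S.filter (fun w => G.Adj u w)).card := by
    intro u
    rw [degIn, ← Nat.card_eq_finsetCard]
    exact Nat.card_congr (Equiv.subtypeEquivRight (by simp))
  set d := degIn G S (v i) with hd
  set m := S.card with hm
  -- basic facts
  have hn1 : 1 ≤ n := i.pos
  have hvi : v i ∈ S := Finset.mem_image_of_mem _ (Finset.mem_Iic.mpr le_rfl)
  have hm1 : 1 ≤ m := Finset.card_pos.mpr ⟨v i, hvi⟩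
  have hmn : m ≤ n := by
    calc m ≤ Fintype.card (Fin n) := Finset.card_le_univ S
    _ = n := Fintype.card_fin n
  have hdm : d + 1 ≤ m := by
    have hsub : S.filter (fun w => G.Adj (v i) w) ⊆ S.erase (v i) := by
      intro x hx
      rw [Finset.mem_filter] at hx
      exact Finset.mem_erase.mpr ⟨hx.2.ne', hx.1⟩
    have := Finset.card_le_card hsub
    rw [Finset.card_erase_of_mem hvi] at this
    rw [hd, hdegIn]
    omega
  -- neighborhoods and common neighborhoods
  set nb : Fin n → Finset (Fin n) := fun w => S.filter (fun x => G.Adj w x) with hnb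
  set cn : Fin n → Fin n → Finset (Fin n) :=
    fun a c => S.filter (fun x => G.Adj x a ∧ G.Adj x c) with hcn
  have hmind : ∀ w ∈ S, d ≤ (nb w).card := by
    intro w hw
    rw [hnb]
    rw [← hdegIn w]
    exact hmin i w hw
  -- the cherry double count
  have key1 : ∑ w ∈ S, (nb w).offDiag.card = ∑ p ∈ S.offDiag, (cn p.1 p.2).card := by
    have h1 : ∀ w, (nb w).offDiag = S.offDiag.filter (fun p => G.Adj w p.1 ∧ G.Adj w p.2) := by
      intro w
      ext p
      simp only [Finset.mem_offDiag, Finset.mem_filter, hnb]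
      tauto
    calc ∑ w ∈ S, (nb w).offDiag.card
        = ∑ w ∈ S, ∑ p ∈ S.offDiag, if G.Adj w p.1 ∧ G.Adj w p.2 then 1 else 0 := by
          simp_rw [h1, Finset.card_filter]
      _ = ∑ p ∈ S.offDiag, ∑ w ∈ S, if G.Adj w p.1 ∧ G.Adj w p.2 then 1 else 0 :=
          Finset.sum_comm
      _ = ∑ p ∈ S.offDiag, (cn p.1 p.2).card := by
          simp_rw [hcn, Finset.card_filter]
  -- the 4-cycle count
  set Q : Finset ((Fin n × Fin n) × (Fin n × Fin n)) :=
    (S.offDiag ×ˢ S.offDiag).filter (fun pq =>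
      G.Adj pq.2.1 pq.1.1 ∧ G.Adj pq.2.1 pq.1.2 ∧ G.Adj pq.2.2 pq.1.1 ∧ G.Adj pq.2.2 pq.1.2)
    with hQ
  have key2 : Q.card = ∑ p ∈ S.offDiag, (cn p.1 p.2).offDiag.card := by
    have h2 : ∀ p : Fin n × Fin n, (cn p.1 p.2).offDiag
        = S.offDiag.filter (fun q : Fin n × Fin n =>
            G.Adj q.1 p.1 ∧ G.Adj q.1 p.2 ∧ G.Adj q.2 p.1 ∧ G.Adj q.2 p.2) := by
      intro p
      ext q
      simp only [Finset.mem_offDiag, Finset.mem_filter, hcn]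
      tauto
    calc Q.card = ∑ pq ∈ S.offDiag ×ˢ S.offDiag,
          if G.Adj pq.2.1 pq.1.1 ∧ G.Adj pq.2.1 pq.1.2 ∧ G.Adj pq.2.2 pq.1.1 ∧ G.Adj pq.2.2 pq.1.2
          then 1 else 0 := by rw [hQ, Finset.card_filter]
      _ = ∑ p ∈ S.offDiag, ∑ q ∈ S.offDiag,
          if G.Adj q.1 p.1 ∧ G.Adj q.1 p.2 ∧ G.Adj q.2 p.1 ∧ G.Adj q.2 p.2
          then 1 else 0 := Finset.sum_product _ _ _
      _ = ∑ p ∈ S.offDiag, (cn p.1 p.2).offDiag.card := by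
          simp_rw [h2, Finset.card_filter]
  -- Step 2 : Q.card ≤ 8 * numC4 G
  have step2 : Q.card ≤ 8 * numC4 G := by
    haveI : Fintype G.Subgraph := Fintype.ofFinite _
    set F : (Fin n × Fin n) × (Fin n × Fin n) → G.Subgraph :=
      fun pq => C4sub G pq.1.1 pq.2.1 pq.1.2 pq.2.2 with hF
    have hQmem : ∀ x ∈ Q, x.1 ∈ S.offDiag ∧ x.2 ∈ S.offDiag ∧
        G.Adj x.2.1 x.1.1 ∧ G.Adj x.2.1 x.1.2 ∧ G.Adj x.2.2 x.1.1 ∧ G.Adj x.2.2 x.1.2 := by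
      intro x hx
      rw [hQ, Finset.mem_filter, Finset.mem_product] at hx
      tauto
    have himg : ∀ H ∈ Q.image F, Nonempty (H.coe ≃g SimpleGraph.cycleGraph 4) := by
      intro H hH'
      obtain ⟨pq, hpq, rfl⟩ := Finset.mem_image.mp hH'
      obtain ⟨hp, hq, h1, h2, h3, h4⟩ := hQmem pq hpq
      rw [Finset.mem_offDiag] at hp hq
      exact C4sub_iso G _ _ _ _ h1.symm h2.symm h4.symm h3.symm hp.2.2 hq.2.2
    have hfib : ∀ H ∈ Q.image F, (Q.filter (fun x => F x = H)).card ≤ 8 := by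
      intro H hH'
      obtain ⟨pq0, hpq0, rfl⟩ := Finset.mem_image.mp hH'
      obtain ⟨⟨a0, c0⟩, b0, d0⟩ := pq0
      set fib := Q.filter (fun x => F x = F ((a0,c0),(b0,d0))) with hfibdef
      have hinj : Set.InjOn (fun x : (Fin n × Fin n) × (Fin n × Fin n) => (x.1.1, x.2.1))
          ↑fib := by
        rintro ⟨⟨a,c⟩,b,e⟩ hx ⟨⟨a',c'⟩,b',e'⟩ hy hxy
        simp only [Prod.mk.injEq] at hxy
        obtain ⟨rfl, rfl⟩ := hxy
        rw [hfibdef, Finset.coe_filter, Set.mem_setOf_eq] at hx hy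
        obtain ⟨hxQ, hxF⟩ := hx
        obtain ⟨hyQ, hyF⟩ := hy
        simp only [hF] at hxF hyF
        have hFxy : C4sub G a b c e = C4sub G a b c' e' := hxF.trans hyF.symm
        obtain ⟨hpx, hqx, x1, x2, x3, x4⟩ := hQmem _ hxQ
        obtain ⟨hpy, hqy, y1, y2, y3, y4⟩ := hQmem _ hyQ
        simp only [Finset.mem_offDiag] at hpx hqx hpy hqy
        -- distinctness facts
        have nac : a ≠ c := hpx.2.2
        have nbe : b ≠ e := hqx.2.2
        have nac' : a ≠ c' := hpy.2.2
        have nbe' : b ≠ e' := hqy.2.2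
        have nba : b ≠ a := x1.ne
        have nbc : b ≠ c := x2.ne
        have nea : e ≠ a := x3.ne
        have nec : e ≠ c := x4.ne
        -- c' = c
        have hcc : c' = c := by
          have hadj : (C4sub G a b c' e').Adj b c' :=
            (C4sub_adj G a b c' e' b c').mpr ⟨Or.inr (Or.inl Sym2.eq_swap), y2⟩
          rw [← hFxy] at hadj
          obtain ⟨hdisj, -⟩ := (C4sub_adj G a b c e b c').mp hadj
          rw [Sym2.eq_iff, Sym2.eq_iff, Sym2.eq_iff, Sym2.eq_iff] at hdisj
          rcases hdisj with (⟨h1,h2⟩|⟨h1,h2⟩)|(⟨h1,h2⟩|⟨h1,h2⟩)|(⟨h1,h2⟩|⟨h1,h2⟩)|(⟨h1,h2⟩|⟨h1,h2⟩) <;>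
            first
              | exact h2
              | exact absurd h1 nba
              | exact absurd h1 nbc
              | exact absurd h1 nbe
              | exact absurd h2.symm nac'
        subst hcc
        -- e' = e
        have hee : e' = e := by
          have hadj : (C4sub G a b c' e').Adj a e' :=
            (C4sub_adj G a b c' e' a e').mpr ⟨Or.inr (Or.inr (Or.inr rfl)), y3.symm⟩
          rw [← hFxy] at hadj
          obtain ⟨hdisj, -⟩ := (C4sub_adj G a b c' e a e').mp hadj
          rw [Sym2.eq_iff, Sym2.eq_iff, Sym2.eq_iff, Sym2.eq_iff] at hdisj
          have nab : a ≠ b := nba.symm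
          have nae : a ≠ e := nea.symm
          have nbe'' : e' ≠ b := fun h => nbe' (h.symm)
          rcases hdisj with (⟨h1,h2⟩|⟨h1,h2⟩)|(⟨h1,h2⟩|⟨h1,h2⟩)|(⟨h1,h2⟩|⟨h1,h2⟩)|(⟨h1,h2⟩|⟨h1,h2⟩) <;>
            first
              | exact h2
              | exact absurd h1 nab
              | exact absurd h1 nac'
              | exact absurd h1 nae
              | exact absurd h2 nbe''
        subst hee
        rfl
      have himg8 : fib.image (fun x => (x.1.1, x.2.1)) ⊆
          [(a0,b0),(b0,a0),(c0,b0),(b0,c0),(c0,d0),(d0,c0),(a0,d0),(d0,a0)].toFinset := by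
        intro z hz
        obtain ⟨x, hx, rfl⟩ := Finset.mem_image.mp hz
        rw [hfibdef, Finset.mem_filter] at hx
        obtain ⟨hxQ, hxF⟩ := hx
        obtain ⟨hpx, hqx, x1, x2, x3, x4⟩ := hQmem _ hxQ
        simp only [hF] at hxF
        have hadj : (C4sub G x.1.1 x.2.1 x.1.2 x.2.2).Adj x.1.1 x.2.1 :=
          (C4sub_adj G _ _ _ _ _ _).mpr ⟨Or.inl rfl, x1.symm⟩
        rw [hxF] at hadj
        obtain ⟨hdisj, -⟩ := (C4sub_adj G _ _ _ _ _ _).mp hadj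
        rw [Sym2.eq_iff, Sym2.eq_iff, Sym2.eq_iff, Sym2.eq_iff] at hdisj
        rcases hdisj with (h|h)|(h|h)|(h|h)|(h|h) <;> simp [h.1, h.2]
      calc fib.card = (fib.image (fun x => (x.1.1, x.2.1))).card :=
            (Finset.card_image_of_injOn hinj).symm
        _ ≤ _ := Finset.card_le_card himg8
        _ ≤ 8 := List.toFinset_card_le _
    have himgcard : (Q.image F).card ≤ numC4 G := by
      rw [numC4, Nat.card_eq_fintype_card, Fintype.card_subtype]
      apply Finset.card_le_card
      intro H hH'
      simp only [Finset.mem_filter, Finset.mem_univ, true_and]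
      exact himg H hH'
    calc Q.card ≤ 8 * (Q.image F).card := Finset.card_le_mul_card_image Q 8 hfib
      _ ≤ 8 * numC4 G := by omega
  -- cherry lower bound
  have hR : m * (d * (d-1)) ≤ ∑ p ∈ S.offDiag, (cn p.1 p.2).card := by
    rw [← key1]
    calc m * (d*(d-1)) = ∑ _w ∈ S, d*(d-1) := by rw [Finset.sum_const, smul_eq_mul, hm]
      _ ≤ ∑ w ∈ S, (nb w).offDiag.card := by
          apply Finset.sum_le_sum
          intro w hw
          rw [Finset.offDiag_card]
          have h1 := hmind w hw
          calc d * (d-1) ≤ (nb w).card * ((nb w).card - 1) :=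
                Nat.mul_le_mul h1 (Nat.sub_le_sub_right h1 1)
            _ = (nb w).card * (nb w).card - (nb w).card := by
                rcases Nat.eq_zero_or_pos (nb w).card with h|h
                · simp [h]
                · have h2 : 1 ≤ (nb w).card := h
                  zify [h2, Nat.le_mul_of_pos_left _ h]
                  ring
  -- real numbers
  have hd3 : 3 ≤ d := by
    have h2 : (2:ℝ) < (d:ℝ) := by
      have : (1:ℝ) ≤ Real.sqrt n := by
        rw [show (1:ℝ) = Real.sqrt 1 by simp]
        exact Real.sqrt_le_sqrt (by exact_mod_cast hn1)
      linarith
    have : 2 < d := by exact_mod_cast h2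
    omega
  have hrs2 : Real.sqrt n ^ 2 = (n:ℝ) := Real.sq_sqrt (by positivity)
  have hrs1 : (1:ℝ) ≤ Real.sqrt n := by
    rw [show (1:ℝ) = Real.sqrt 1 by simp]
    exact Real.sqrt_le_sqrt (by exact_mod_cast hn1)
  set rs := Real.sqrt n with hrsdef
  set D := (d:ℝ) with hD
  set M := (m:ℝ) with hM
  set Rr := ∑ p ∈ S.offDiag, ((cn p.1 p.2).card : ℝ) with hRr
  set T2 := ∑ p ∈ S.offDiag, ((cn p.1 p.2).card : ℝ)^2 with hT2
  have hCS : Rr^2 ≤ (S.offDiag.card : ℝ) * T2 := sq_sum_le_card_mul_sum_sq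
  have hPr : (S.offDiag.card : ℝ) = M * M - M := by
    rw [Finset.offDiag_card]
    have : S.card ≤ S.card * S.card := Nat.le_mul_of_pos_left _ hm1
    rw [Nat.cast_sub this, hM, hm]
    push_cast
    ring
  have hRlow : M * (D * (D - 1)) ≤ Rr := by
    have := hR
    have hcast : ((m * (d * (d-1)) : ℕ) : ℝ) = M * (D * (D - 1)) := by
      push_cast [Nat.cast_sub (show 1 ≤ d by omega)]
      ring
    calc M * (D * (D-1)) = ((m * (d * (d-1)) : ℕ) : ℝ) := hcast.symm
      _ ≤ ((∑ p ∈ S.offDiag, (cn p.1 p.2).card : ℕ) : ℝ) := by exact_mod_cast this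
      _ = Rr := by push_cast; rfl
  have hQr : (Q.card : ℝ) = T2 - Rr := by
    rw [key2, hT2, hRr]
    push_cast
    rw [← Finset.sum_sub_distrib]
    apply Finset.sum_congr rfl
    intro p _
    rw [Finset.offDiag_card]
    rcases Nat.eq_zero_or_pos (cn p.1 p.2).card with h|h
    · simp [h]
    · have : (cn p.1 p.2).card ≤ (cn p.1 p.2).card * (cn p.1 p.2).card :=
        Nat.le_mul_of_pos_left _ h
      push_cast [this]
      ring
  have h8 : (Q.card : ℝ) ≤ 8 * (numC4 G : ℝ) := by exact_mod_cast step2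
  have hQc0 : (0:ℝ) ≤ (Q.card : ℝ) := by positivity
  have hDrs : 2 * rs < D := hlt
  have hMN' : M ≤ rs^2 := by rw [hrs2, hM]; exact_mod_cast hmn
  have hDM : D + 1 ≤ M := by rw [hD, hM]; exact_mod_cast hdm
  have hM1 : (1:ℝ) ≤ M := by rw [hM]; exact_mod_cast hm1
  have hGrs : (numC4 G : ℝ) ≤ 4*(rs^2)^2/9 := by
    rw [hrs2]
    exact hG
  exact arith_contra rs D M _ Rr T2 _ _ hrs1 hDrs hDM hM1 hMN' hPr hCS hRlow hQr hQc0 h8 hGrs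
end

section
/- There exists n₀ such that for every integer n ≥ n₀ and every graph G ∈ 𝒢_n, the number of edges of G not in Ĝ satisfies |E(G) \ E(Ĝ)| ≤ 4 n^{3/2}/log² n. -/
/-- The graph `Ĝ` obtained from `G` by deleting, for every pair `i < j` whose number of
common neighbors exceeds the threshold `t`, all edges from `i` to the common neighborhood
`N_G(i,j)`. -/
def hatG {n : ℕ} (G : SimpleGraph (Fin n)) (t : ℝ) : SimpleGraph (Fin n) where
  Adj x y := G.Adj x y ∧
    (¬ ∃ j, x < j ∧ t < (Nat.card ↥(G.neighborSet x ∩ G.neighborSet j) : ℝ) ∧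
      y ∈ G.neighborSet x ∩ G.neighborSet j) ∧
    (¬ ∃ j, y < j ∧ t < (Nat.card ↥(G.neighborSet y ∩ G.neighborSet j) : ℝ) ∧
      x ∈ G.neighborSet y ∩ G.neighborSet j)
  symm := ⟨fun x y h => ⟨h.1.symm, h.2.2, h.2.1⟩⟩
  loopless := ⟨fun x h => G.loopless.irrefl x h.1⟩

attribute [local instance] Classical.propDecidable

variable {n : ℕ} (G : SimpleGraph (Fin n))

/-- common neighborhood as a Finset -/
noncomputable def comF (i j : Fin n) : Finset (Fin n) :=
  Finset.univ.filter (fun v => G.Adj i v ∧ G.Adj j v)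

lemma mem_comF {i j v : Fin n} : v ∈ comF G i j ↔ G.Adj i v ∧ G.Adj j v := by
  simp [comF]

lemma card_comF (i j : Fin n) :
    Nat.card ↥(G.neighborSet i ∩ G.neighborSet j) = (comF G i j).card := by
  rw [Nat.card_coe_set_eq, Set.ncard_eq_toFinset_card']
  congr 1
  ext v
  simp [comF, Set.mem_toFinset]

noncomputable def badF (t : ℝ) : Finset (Fin n × Fin n) :=
  Finset.univ.filter (fun p => p.1 < p.2 ∧ t < ((comF G p.1 p.2).card : ℝ))

instance : Finite G.Subgraph := by
  have : Function.Injective (fun H : G.Subgraph => (H.verts, H.Adj)) := by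
    intro H1 H2 h
    simp only [Prod.mk.injEq] at h
    exact SimpleGraph.Subgraph.ext h.1 h.2
  exact Finite.of_injective _ this

/-- the 4-cycle subgraph on diagonals {i,j} and {u,v} -/
def quadSub (i j u v : Fin n) : G.Subgraph where
  verts := {i, j, u, v}
  Adj x y := G.Adj x y ∧
    (((x = i ∨ x = j) ∧ (y = u ∨ y = v)) ∨ ((x = u ∨ x = v) ∧ (y = i ∨ y = j)))
  adj_sub h := h.1
  edge_vert h := by
    rcases h.2 with ⟨h1, _⟩ | ⟨h1, _⟩ <;> simp [Set.mem_insert_iff] <;> tauto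
  symm := by
    constructor
    intro x y h
    refine ⟨h.1.symm, ?_⟩
    tauto

def QuadValid (i j u v : Fin n) : Prop :=
  i < j ∧ u ≠ v ∧ G.Adj i u ∧ G.Adj i v ∧ G.Adj j u ∧ G.Adj j v

namespace QuadValid

variable {G} {i j u v : Fin n} (h : QuadValid G i j u v)

include h

lemma ij : i ≠ j := h.1.ne
lemma uv : u ≠ v := h.2.1
lemma iu : i ≠ u := h.2.2.1.ne
lemma iv : i ≠ v := h.2.2.2.1.ne
lemma ju : j ≠ u := h.2.2.2.2.1.ne
lemma jv : j ≠ v := h.2.2.2.2.2.ne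

lemma adj_iff {x y : Fin n} : (quadSub G i j u v).Adj x y ↔
    (((x = i ∨ x = j) ∧ (y = u ∨ y = v)) ∨ ((x = u ∨ x = v) ∧ (y = i ∨ y = j))) := by
  obtain ⟨-, -, aiu, aiv, aju, ajv⟩ := h
  constructor
  · exact fun hh => hh.2
  · intro hh
    refine ⟨?_, hh⟩
    rcases hh with ⟨h1 | h1, h2 | h2⟩ | ⟨h1 | h1, h2 | h2⟩ <;> subst h1 <;> subst h2 <;>
      first | assumption | exact SimpleGraph.Adj.symm (by assumption)

end QuadValid

lemma QuadValid.iso {i j u v : Fin n} {G : SimpleGraph (Fin n)} (h : QuadValid G i j u v) :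
    Nonempty ((quadSub G i j u v).coe ≃g SimpleGraph.cycleGraph 4) := by
  have hij := h.ij; have huv := h.uv; have hiu := h.iu
  have hiv := h.iv; have hju := h.ju; have hjv := h.jv
  have mi : i ∈ (quadSub G i j u v).verts := by simp [quadSub]
  have mj : j ∈ (quadSub G i j u v).verts := by simp [quadSub]
  have mu : u ∈ (quadSub G i j u v).verts := by simp [quadSub]
  have mv : v ∈ (quadSub G i j u v).verts := by simp [quadSub]
  let f : Fin 4 → (quadSub G i j u v).verts := ![⟨i, mi⟩, ⟨u, mu⟩, ⟨j, mj⟩, ⟨v, mv⟩]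
  let g : (quadSub G i j u v).verts → Fin 4 := fun w =>
    if (w : Fin n) = i then 0 else if (w : Fin n) = u then 1
    else if (w : Fin n) = j then 2 else 3
  have left : ∀ a : Fin 4, g (f a) = a := by
    intro a
    fin_cases a <;>
      simp [f, g, hij, huv, hiu, hiv, hju, hjv, hij.symm, huv.symm, hiu.symm, hiv.symm,
        hju.symm, hjv.symm]
  have right : ∀ w : (quadSub G i j u v).verts, f (g w) = w := by
    rintro ⟨w, hw⟩
    simp only [quadSub, Set.mem_insert_iff, Set.mem_singleton_iff] at hw
    rcases hw with rfl | rfl | rfl | rfl <;>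
      · apply Subtype.ext
        simp [f, g, hij, huv, hiu, hiv, hju, hjv, hij.symm, huv.symm, hiu.symm, hiv.symm,
          hju.symm, hjv.symm]
  refine ⟨(SimpleGraph.Iso.symm ⟨⟨f, g, left, right⟩, ?_⟩ : _)⟩
  intro a b
  fin_cases a <;> fin_cases b <;>
    simp [f, SimpleGraph.Subgraph.coe_adj, h.adj_iff, SimpleGraph.cycleGraph_adj,
      hij, huv, hiu, hiv, hju, hjv, hij.symm, huv.symm, hiu.symm, hiv.symm,
      hju.symm, hjv.symm] <;> decide

lemma samePair {α : Type*} {a b x y : α} (hab : a ≠ b) (hx : x = a ∨ x = b)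
    (hy : y = a ∨ y = b) (hxy : x ≠ y) : (x = a ∧ y = b) ∨ (x = b ∧ y = a) := by
  rcases hx with rfl | rfl <;> rcases hy with rfl | rfl <;> simp_all

lemma quadSub_eq_cases {G : SimpleGraph (Fin n)} {i j u v i' j' u' v' : Fin n}
    (h : QuadValid G i j u v) (h' : QuadValid G i' j' u' v')
    (heq : quadSub G i' j' u' v' = quadSub G i j u v) :
    (i' = i ∧ j' = j ∧ ((u' = u ∧ v' = v) ∨ (u' = v ∧ v' = u))) ∨
    (((i' = u ∧ j' = v) ∨ (i' = v ∧ j' = u)) ∧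
      ((u' = i ∧ v' = j) ∨ (u' = j ∧ v' = i))) := by
  have hij := h.ij; have huv := h.uv; have hiu := h.iu
  have hiv := h.iv; have hju := h.ju; have hjv := h.jv
  have hij' := h'.ij; have huv' := h'.uv; have hiu' := h'.iu
  have hiv' := h'.iv; have hju' := h'.ju; have hjv' := h'.jv
  have hP : ∀ x y : Fin n,
      ((x = i' ∨ x = j') ∧ (y = u' ∨ y = v') ∨ (x = u' ∨ x = v') ∧ (y = i' ∨ y = j')) ↔
      ((x = i ∨ x = j) ∧ (y = u ∨ y = v) ∨ (x = u ∨ x = v) ∧ (y = i ∨ y = j)) := by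
    intro x y
    rw [← h'.adj_iff, ← h.adj_iff, heq]
  have hverts : ({i', j', u', v'} : Set (Fin n)) = {i, j, u, v} := by
    have := congrArg SimpleGraph.Subgraph.verts heq
    simpa [quadSub] using this
  have hmem : ∀ w : Fin n, w = i' ∨ w = j' ∨ w = u' ∨ w = v' → w = i ∨ w = j ∨ w = u ∨ w = v := by
    intro w hw
    have : w ∈ ({i', j', u', v'} : Set (Fin n)) := by
      simp [Set.mem_insert_iff]; tauto
    rw [hverts] at this
    simpa [Set.mem_insert_iff] using this
  have piu := (hP i' u').mp (Or.inl ⟨Or.inl rfl, Or.inl rfl⟩)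
  have piv := (hP i' v').mp (Or.inl ⟨Or.inl rfl, Or.inr rfl⟩)
  have pij : ¬((i' = i ∨ i' = j) ∧ (j' = u ∨ j' = v) ∨
      (i' = u ∨ i' = v) ∧ (j' = i ∨ j' = j)) := by
    intro hc
    have := (hP i' j').mpr hc
    rcases this with ⟨_, h2 | h2⟩ | ⟨h1 | h1, _⟩ <;> simp_all
  have puv : ¬((u' = i ∨ u' = j) ∧ (v' = u ∨ v' = v) ∨
      (u' = u ∨ u' = v) ∧ (v' = i ∨ v' = j)) := by
    intro hc
    have := (hP u' v').mpr hc
    rcases this with ⟨h1 | h1, _⟩ | ⟨_, h2 | h2⟩ <;> simp_all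
  rcases piu with ⟨hi1, hu1⟩ | ⟨hi1, hu1⟩
  · -- i' ∈ {i,j}, u' ∈ {u,v}
    have hj1 : j' = i ∨ j' = j := by
      have := hmem j' (Or.inr (Or.inl rfl))
      rcases this with hh | hh | hh | hh
      · exact Or.inl hh
      · exact Or.inr hh
      · exact absurd (Or.inl ⟨hi1, Or.inl hh⟩) pij
      · exact absurd (Or.inl ⟨hi1, Or.inr hh⟩) pij
    have hv1 : v' = u ∨ v' = v := by
      rcases piv with ⟨_, hh⟩ | ⟨hh, _⟩
      · exact hh
      · rcases hh with rfl | rfl <;> rcases hi1 with rfl | rfl <;> simp_all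
    rcases samePair hij hi1 hj1 hij' with ⟨rfl, rfl⟩ | ⟨rfl, rfl⟩
    · exact Or.inl ⟨rfl, rfl, samePair huv hu1 hv1 huv'⟩
    · exact absurd h'.1 (lt_asymm h.1)
  · -- i' ∈ {u,v}, u' ∈ {i,j}
    have hj1 : j' = u ∨ j' = v := by
      have := hmem j' (Or.inr (Or.inl rfl))
      rcases this with hh | hh | hh | hh
      · exact absurd (Or.inr ⟨hi1, Or.inl hh⟩) pij
      · exact absurd (Or.inr ⟨hi1, Or.inr hh⟩) pij
      · exact Or.inl hh
      · exact Or.inr hh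
    have hv1 : v' = i ∨ v' = j := by
      rcases piv with ⟨hh, _⟩ | ⟨_, hh⟩
      · rcases hh with rfl | rfl <;> rcases hi1 with rfl | rfl <;> simp_all
      · exact hh
    exact Or.inr ⟨samePair huv hi1 hj1 hij', samePair hij hu1 hv1 huv'⟩

noncomputable def quadQ (G : SimpleGraph (Fin n)) (t : ℝ) :
    Finset (Σ _ : Fin n × Fin n, Fin n × Fin n) :=
  (badF G t).sigma (fun p => (comF G p.1 p.2).offDiag)

lemma quadQ_valid {G : SimpleGraph (Fin n)} {t : ℝ}
    {q : Σ _ : Fin n × Fin n, Fin n × Fin n} (hq : q ∈ quadQ G t) :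
    QuadValid G q.1.1 q.1.2 q.2.1 q.2.2 := by
  rw [quadQ, Finset.mem_sigma] at hq
  obtain ⟨h1, h2⟩ := hq
  rw [badF, Finset.mem_filter] at h1
  rw [Finset.mem_offDiag] at h2
  obtain ⟨hu, hv, huv⟩ := h2
  rw [mem_comF] at hu hv
  exact ⟨h1.2.1, huv, hu.1, hv.1, hu.2, hv.2⟩

lemma sum_core (G : SimpleGraph (Fin n)) (t : ℝ) :
    ∑ p ∈ badF G t, ((comF G p.1 p.2).card * (comF G p.1 p.2).card
      - (comF G p.1 p.2).card) ≤ 4 * numC4 G := by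
  classical
  set Q := quadQ G t with hQ
  let g : (Σ _ : Fin n × Fin n, Fin n × Fin n) → G.Subgraph :=
    fun q => quadSub G q.1.1 q.1.2 q.2.1 q.2.2
  have hcard : Q.card = ∑ p ∈ badF G t, ((comF G p.1 p.2).card * (comF G p.1 p.2).card
      - (comF G p.1 p.2).card) := by
    rw [hQ, quadQ, Finset.card_sigma]
    exact Finset.sum_congr rfl fun p _ => Finset.offDiag_card _
  have hfiber : ∀ H ∈ Q.image g, (Q.filter (fun q => g q = H)).card ≤ 4 := by
    intro H hH
    obtain ⟨q₀, hq₀, hgq₀⟩ := Finset.mem_image.mp hH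
    obtain ⟨⟨i, j⟩, u, v⟩ := q₀
    have hval := quadQ_valid hq₀
    set w : Fin n × Fin n := if u < v then (u, v) else (v, u) with hw
    have hsub : Q.filter (fun q => g q = H) ⊆
        ({⟨(i, j), (u, v)⟩, ⟨(i, j), (v, u)⟩, ⟨w, (i, j)⟩, ⟨w, (j, i)⟩} :
          Finset (Σ _ : Fin n × Fin n, Fin n × Fin n)) := by
      intro q' hq'
      rw [Finset.mem_filter] at hq'
      obtain ⟨hq'Q, hgq'⟩ := hq'
      obtain ⟨⟨i', j'⟩, u', v'⟩ := q'
      have hval' := quadQ_valid hq'Q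
      have heq : quadSub G i' j' u' v' = quadSub G i j u v := by
        rw [← hgq₀] at hgq'
        exact hgq'
      have hlt' : i' < j' := hval'.1
      rcases quadSub_eq_cases hval hval' heq with
        ⟨rfl, rfl, ⟨rfl, rfl⟩ | ⟨rfl, rfl⟩⟩ | ⟨⟨rfl, rfl⟩ | ⟨rfl, rfl⟩, hsecond⟩
      · simp
      · simp
      · have : w = (i', j') := by rw [hw, if_pos hlt']
        rcases hsecond with ⟨rfl, rfl⟩ | ⟨rfl, rfl⟩ <;> simp [this]
      · have : w = (i', j') := by rw [hw, if_neg (asymm hlt')]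
        rcases hsecond with ⟨rfl, rfl⟩ | ⟨rfl, rfl⟩ <;> simp [this]
    calc (Q.filter (fun q => g q = H)).card ≤ _ := Finset.card_le_card hsub
      _ ≤ 4 := by
        apply le_trans (Finset.card_insert_le _ _)
        apply Nat.succ_le_succ
        apply le_trans (Finset.card_insert_le _ _)
        apply Nat.succ_le_succ
        apply le_trans (Finset.card_insert_le _ _)
        apply Nat.succ_le_succ
        exact Finset.card_singleton _ |>.le
  have h1 : Q.card ≤ 4 * (Q.image g).card := Finset.card_le_mul_card_image Q 4 hfiber
  have h2 : (Q.image g).card ≤ numC4 G := by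
    rw [← Nat.card_eq_finsetCard]
    apply Nat.card_le_card_of_injective
      (fun H : {H // H ∈ Q.image g} =>
        (⟨H.1, by
          obtain ⟨q, hq, hgq⟩ := Finset.mem_image.mp H.2
          rw [← hgq]
          exact (quadQ_valid hq).iso⟩ :
          {H : G.Subgraph // Nonempty (H.coe ≃g SimpleGraph.cycleGraph 4)}))
    intro a b hab
    exact Subtype.ext (by simpa using hab)
  calc _ = Q.card := hcard.symm
    _ ≤ 4 * (Q.image g).card := h1
    _ ≤ 4 * numC4 G := by omega

lemma deleted_le (G : SimpleGraph (Fin n)) (t : ℝ) :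
    Nat.card ↥(G.edgeSet \ (hatG G t).edgeSet) ≤
      ∑ p ∈ badF G t, (comF G p.1 p.2).card := by
  classical
  set T : Finset (Σ _ : Fin n × Fin n, Fin n) :=
    (badF G t).sigma (fun p => comF G p.1 p.2) with hT
  have spec : ∀ e ∈ G.edgeSet \ (hatG G t).edgeSet,
      ∃ q : Σ _ : Fin n × Fin n, Fin n, q ∈ T ∧ e = s(q.1.1, q.2) := by
    intro e he
    obtain ⟨he1, he2⟩ := he
    induction e using Sym2.ind with
    | _ x y =>
      rw [SimpleGraph.mem_edgeSet] at he1
      rw [SimpleGraph.mem_edgeSet] at he2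
      have hor : (∃ j, x < j ∧ t < (Nat.card ↥(G.neighborSet x ∩ G.neighborSet j) : ℝ) ∧
          y ∈ G.neighborSet x ∩ G.neighborSet j) ∨
          (∃ j, y < j ∧ t < (Nat.card ↥(G.neighborSet y ∩ G.neighborSet j) : ℝ) ∧
          x ∈ G.neighborSet y ∩ G.neighborSet j) := by
        by_contra hc
        exact he2 (by show G.Adj x y ∧ _ ∧ _; exact ⟨he1, fun h => hc (Or.inl h), fun h => hc (Or.inr h)⟩)
      rcases hor with ⟨jj, hlt, hcard, hmem⟩ | ⟨jj, hlt, hcard, hmem⟩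
      · refine ⟨⟨(x, jj), y⟩, ?_, rfl⟩
        rw [hT, Finset.mem_sigma]
        constructor
        · rw [badF, Finset.mem_filter]
          refine ⟨Finset.mem_univ _, hlt, ?_⟩
          rw [← card_comF]
          exact hcard
        · rw [mem_comF]
          exact ⟨hmem.1, hmem.2⟩
      · refine ⟨⟨(y, jj), x⟩, ?_, Sym2.eq_swap⟩
        rw [hT, Finset.mem_sigma]
        constructor
        · rw [badF, Finset.mem_filter]
          refine ⟨Finset.mem_univ _, hlt, ?_⟩
          rw [← card_comF]
          exact hcard
        · rw [mem_comF]
          exact ⟨hmem.1, hmem.2⟩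
  have hinj : ∃ F : ↥(G.edgeSet \ (hatG G t).edgeSet) → {q // q ∈ T},
      Function.Injective F := by
    refine ⟨fun e => ⟨(spec e.1 e.2).choose, (spec e.1 e.2).choose_spec.1⟩, ?_⟩
    intro e₁ e₂ h
    have h1 := (spec e₁.1 e₁.2).choose_spec.2
    have h2 := (spec e₂.1 e₂.2).choose_spec.2
    have : (spec e₁.1 e₁.2).choose = (spec e₂.1 e₂.2).choose := by
      simpa using h
    apply Subtype.ext
    rw [h1, h2, this]
  obtain ⟨F, hF⟩ := hinj
  calc Nat.card ↥(G.edgeSet \ (hatG G t).edgeSet) ≤ Nat.card {q // q ∈ T} :=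
        Nat.card_le_card_of_injective F hF
    _ = T.card := Nat.card_eq_finsetCard T
    _ = _ := Finset.card_sigma _ _

lemma eventually_log4 : ∀ᶠ x : ℝ in Filter.atTop, 32 * Real.logb 2 x ^ 4 ≤ Real.sqrt x := by
  have h := isLittleO_log_rpow_atTop (by norm_num : (0:ℝ) < 1/8)
  have h4 := h.pow (n := 4) (by norm_num)
  have hc : (0:ℝ) < Real.log 2 ^ 4 / 32 := by positivity
  have hb := h4.def hc
  filter_upwards [hb, Filter.eventually_ge_atTop (1:ℝ)] with x hx hx1
  have hx0 : (0:ℝ) ≤ x := le_trans zero_le_one hx1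
  have hlx : 0 ≤ Real.log x := Real.log_nonneg hx1
  have hrw : ((x ^ (1/8 : ℝ)) ^ (4:ℕ)) = Real.sqrt x := by
    rw [← Real.rpow_natCast (x ^ (1/8:ℝ)) 4, ← Real.rpow_mul hx0, Real.sqrt_eq_rpow]
    norm_num
  rw [Real.norm_eq_abs, Real.norm_eq_abs, hrw] at hx
  rw [abs_of_nonneg (by positivity), abs_of_nonneg (Real.sqrt_nonneg x)] at hx
  have hl2 : (0:ℝ) < Real.log 2 := Real.log_pos (by norm_num)
  have hl24 : (0:ℝ) < Real.log 2 ^ 4 := by positivity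
  rw [Real.logb, div_pow, ← mul_div_assoc, div_le_iff₀ hl24]
  nlinarith [Real.sqrt_nonneg x]

/-- With `a = 32 log⁶ n` and `b = 16 log⁴ n` (base-2 logs): for all sufficiently large `n`
and every graph `G` on `[n]` with at most `n²/a` copies of `C₄`, the number of edges of `G`
not in `Ĝ` (built with threshold `√n/b`) is at most `4 n^{3/2} / log² n`. -/
theorem statement_8 :
    ∃ n₀ : ℕ, ∀ n : ℕ, n₀ ≤ n → ∀ G : SimpleGraph (Fin n),
      (numC4 G : ℝ) ≤ (n : ℝ) ^ 2 / (32 * Real.logb 2 n ^ 6) →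
      (Nat.card
          ↥(G.edgeSet \ (hatG G (Real.sqrt n / (16 * Real.logb 2 n ^ 4))).edgeSet) : ℝ) ≤
        4 * (n : ℝ) ^ ((3 : ℝ) / 2) / Real.logb 2 n ^ 2 := by
  obtain ⟨x₀, hx₀⟩ := Filter.eventually_atTop.mp eventually_log4
  refine ⟨max 2 (Nat.ceil x₀), fun n hn G hC4 => ?_⟩
  have hn2 : 2 ≤ n := le_trans (le_max_left _ _) hn
  have hn2' : (2:ℝ) ≤ (n:ℝ) := by exact_mod_cast hn2
  have hn0 : (0:ℝ) < n := by linarith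
  have hnx : x₀ ≤ (n:ℝ) :=
    le_trans (Nat.le_ceil x₀) (Nat.cast_le.mpr (le_trans (le_max_right _ _) hn))
  have hsqrt32 : 32 * Real.logb 2 (n:ℝ) ^ 4 ≤ Real.sqrt n := hx₀ n hnx
  set L : ℝ := Real.logb 2 (n:ℝ) with hLdef
  have hL1 : 1 ≤ L := by
    rw [hLdef]
    rw [Real.le_logb_iff_rpow_le (by norm_num) hn0]
    rw [Real.rpow_one]
    exact hn2'
  have hL0 : 0 < L := by linarith
  have hs0 : 0 < Real.sqrt n := Real.sqrt_pos.mpr hn0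
  set t : ℝ := Real.sqrt n / (16 * L ^ 4) with htdef
  have hL4 : (0:ℝ) < 16 * L ^ 4 := by positivity
  have ht2 : 2 ≤ t := by
    rw [htdef, le_div_iff₀ hL4]
    nlinarith [hsqrt32]
  have h1t : (0:ℝ) < t - 1 := by linarith
  -- the ℕ-level bounds
  have hdel := deleted_le G t
  have hsum := sum_core G t
  -- per-term bound on the bad set
  have hterm : ∀ p ∈ badF G t, ((comF G p.1 p.2).card : ℝ) ≤
      (((comF G p.1 p.2).card : ℝ) * ((comF G p.1 p.2).card : ℝ)
        - ((comF G p.1 p.2).card : ℝ)) / (t - 1) := by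
    intro p hp
    rw [badF, Finset.mem_filter] at hp
    obtain ⟨-, -, htS⟩ := hp
    set S : ℝ := ((comF G p.1 p.2).card : ℝ)
    rw [le_div_iff₀ h1t]
    nlinarith [htS, ht2]
  -- cast of the quadratic sum
  have hcast : ∑ p ∈ badF G t, (((comF G p.1 p.2).card : ℝ) * ((comF G p.1 p.2).card : ℝ)
      - ((comF G p.1 p.2).card : ℝ)) =
      ((∑ p ∈ badF G t, ((comF G p.1 p.2).card * (comF G p.1 p.2).card
        - (comF G p.1 p.2).card) : ℕ) : ℝ) := by
    rw [Nat.cast_sum]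
    refine Finset.sum_congr rfl fun p _ => ?_
    have hss : (comF G p.1 p.2).card ≤ (comF G p.1 p.2).card * (comF G p.1 p.2).card := by
      rcases Nat.eq_zero_or_pos (comF G p.1 p.2).card with h | h
      · simp [h]
      · exact Nat.le_mul_of_pos_left _ h
    rw [Nat.cast_sub hss]
    push_cast
    ring
  have hchain : (Nat.card ↥(G.edgeSet \ (hatG G t).edgeSet) : ℝ) ≤
      (4 * ((n:ℝ) ^ 2 / (32 * L ^ 6))) / (t - 1) := by
    calc (Nat.card ↥(G.edgeSet \ (hatG G t).edgeSet) : ℝ)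
        ≤ ((∑ p ∈ badF G t, (comF G p.1 p.2).card : ℕ) : ℝ) := by exact_mod_cast hdel
      _ = ∑ p ∈ badF G t, ((comF G p.1 p.2).card : ℝ) := by rw [Nat.cast_sum]
      _ ≤ ∑ p ∈ badF G t, (((comF G p.1 p.2).card : ℝ) * ((comF G p.1 p.2).card : ℝ)
          - ((comF G p.1 p.2).card : ℝ)) / (t - 1) := Finset.sum_le_sum hterm
      _ = (∑ p ∈ badF G t, (((comF G p.1 p.2).card : ℝ) * ((comF G p.1 p.2).card : ℝ)
          - ((comF G p.1 p.2).card : ℝ))) / (t - 1) := by rw [Finset.sum_div]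
      _ ≤ (4 * ((n:ℝ) ^ 2 / (32 * L ^ 6))) / (t - 1) := by
          rw [div_le_div_iff_of_pos_right h1t, hcast]
          calc ((∑ p ∈ badF G t, ((comF G p.1 p.2).card * (comF G p.1 p.2).card
              - (comF G p.1 p.2).card) : ℕ) : ℝ) ≤ ((4 * numC4 G : ℕ) : ℝ) := by
                exact_mod_cast hsum
            _ = 4 * (numC4 G : ℝ) := by push_cast; ring
            _ ≤ 4 * ((n:ℝ) ^ 2 / (32 * L ^ 6)) := by linarith [hC4]
  have h32 : (n:ℝ) ^ ((3:ℝ)/2) = (n:ℝ) ^ 2 / Real.sqrt n := by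
    rw [Real.sqrt_eq_rpow, ← Real.rpow_natCast (n:ℝ) 2, ← Real.rpow_sub hn0]
    norm_num
  calc (Nat.card ↥(G.edgeSet \ (hatG G t).edgeSet) : ℝ)
      ≤ (4 * ((n:ℝ) ^ 2 / (32 * L ^ 6))) / (t - 1) := hchain
    _ ≤ (4 * ((n:ℝ) ^ 2 / (32 * L ^ 6))) / (t / 2) := by
        apply div_le_div_of_nonneg_left (by positivity) (by linarith) (by linarith)
    _ = 4 * (n:ℝ) ^ ((3:ℝ)/2) / L ^ 2 := by
        rw [h32, htdef]
        have hL0' : L ≠ 0 := ne_of_gt hL0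
        have hs0' : Real.sqrt n ≠ 0 := ne_of_gt hs0
        field_simp
        ring
end
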